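/- (FloodSet validity.) For any delivery pattern and every process p, the decision of p is some process's initial proposal: there exists a process q such that the minimum of W r p equals init q. -/
import Mathlib


open scoped Classical

/-- The FloodSet execution: `W 0 p = {init p}` and, for `t < r`,
`W (t+1) p = W t p ∪ ⋃ q, (if delivered t q p then W t q else ∅)`
(beyond round `r` the set is just carried along). -/
noncomputable def floodW {n r : ℕ} {V : Type} (init : Fin n → V)
    (delivered : Fin r → Fin n → Fin n → Prop) : ℕ → Fin n → Finset V
  | 0, p => {init p}
  | t + 1, p =>
      if h : t < r then
        floodW init delivered t p ∪
          Finset.univ.biUnion fun q =>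
            if delivered ⟨t, h⟩ q p then floodW init delivered t q else ∅
      else floodW init delivered t p

/-- Process `p` is alive at the end of round `t`. -/
def aliveAtEnd {n r : ℕ} (crash : Fin n → Option (Fin r)) (t : ℕ) (p : Fin n) : Prop :=
  crash p = none ∨ ∃ s : Fin r, crash p = some s ∧ t < s.val

/-- The delivery pattern is consistent with the crash pattern. -/
def consistentDel {n r : ℕ} (crash : Fin n → Option (Fin r))
    (delivered : Fin r → Fin n → Fin n → Prop) : Prop :=
  (∀ (t : Fin r) (q p : Fin n),
      (crash q = none ∨ ∃ s : Fin r, crash q = some s ∧ t.val < s.val) → delivered t q p) ∧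
  (∀ (t : Fin r) (q p : Fin n) (s : Fin r), crash q = some s → s.val < t.val →
      ¬ delivered t q p)

lemma floodW_subset {n r : ℕ} {V : Type} (init : Fin n → V)
    (delivered : Fin r → Fin n → Fin n → Prop) :
    ∀ t p, floodW init delivered t p ⊆ Finset.univ.image init := by
  intro t
  induction t with
  | zero => intro p x hx; simp [floodW] at hx; subst hx; simp
  | succ t ih =>
    intro p x hx
    unfold floodW at hx
    split at hx
    · simp only [Finset.mem_union, Finset.mem_biUnion] at hx
      rcases hx with hx | ⟨q, _, hx⟩
      · exact ih p hx
      · split at hx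
        · exact ih q hx
        · simp at hx
    · exact ih p hx

lemma floodW_nonempty {n r : ℕ} {V : Type} (init : Fin n → V)
    (delivered : Fin r → Fin n → Fin n → Prop) :
    ∀ t p, (floodW init delivered t p).Nonempty := by
  intro t
  induction t with
  | zero => intro p; simp [floodW]
  | succ t ih =>
    intro p
    unfold floodW
    split
    · exact (ih p).mono Finset.subset_union_left
    · exact ih p

/-- FloodSet validity. -/
theorem stmt_10 (n r : ℕ) (hr : 1 ≤ r)
    (V : Type) [Fintype V] [Nonempty V] [LinearOrder V]
    (init : Fin n → V) (delivered : Fin r → Fin n → Fin n → Prop) :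
    ∀ p : Fin n, ∃ q : Fin n,
      (floodW init delivered r p).min = (init q : WithBot V) := by
  intro p
  have hne := floodW_nonempty init delivered r p
  have hmin := Finset.min'_mem _ hne
  have := floodW_subset init delivered r p hmin
  simp only [Finset.mem_image, Finset.mem_univ, true_and] at this
  obtain ⟨q, hq⟩ := this
  exact ⟨q, by rw [hq]; exact (Finset.coe_min' hne).symm⟩
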